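/- Let Y, Z be Banach spaces, F ⊂ Y, and f : F → Z be K-Lipschitz with K > 0. Let v ∈ Y, 0 < δ₁ < δ₂, ω > 0. Then the two-sided Hadamard derived set satisfies D̂[δ₂, ω] f(y, v) ⊂ D̂[δ₁, ω] f(y, v) + B(0, 2K(‖v‖ + ω)(1 − δ₁/δ₂)) when F = Y. -/

import Mathlib

open Filter Metric Set Pointwise

/-- Two-sided Hadamard derived set
`D̂[δ,ω] f(y,v) = {(f(y+tû) − f(y))/t : 0 < |t| < δ, û ∈ B(v,ω)}`
for `f` defined on the whole space. -/
def DSetBoth {Y Z : Type*} [NormedAddCommGroup Y] [NormedSpace ℝ Y]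
    [NormedAddCommGroup Z] [NormedSpace ℝ Z]
    (f : Y → Z) (y v : Y) (δ ω : ℝ) : Set Z :=
  {z | ∃ t : ℝ, t ≠ 0 ∧ |t| < δ ∧
    ∃ u ∈ Metric.closedBall v ω, z = t⁻¹ • (f (y + t • u) - f y)}

theorem stmt_8 {Y Z : Type*} [NormedAddCommGroup Y] [NormedSpace ℝ Y] [CompleteSpace Y]
    [NormedAddCommGroup Z] [NormedSpace ℝ Z] [CompleteSpace Z]
    (f : Y → Z) (K : ℝ) (hK : 0 < K)
    (hf : ∀ a b : Y, ‖f a - f b‖ ≤ K * ‖a - b‖)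
    (y v : Y) (δ₁ δ₂ ω : ℝ) (h1 : 0 < δ₁) (h12 : δ₁ < δ₂) (hω : 0 < ω) :
    DSetBoth f y v δ₂ ω ⊆
      DSetBoth f y v δ₁ ω +
        Metric.closedBall (0 : Z) (2 * K * (‖v‖ + ω) * (1 - δ₁ / δ₂)) := by
  rintro z ⟨t, ht0, htδ, u, hu, rfl⟩
  have htabs : 0 < |t| := abs_pos.mpr ht0
  have hδ2 : 0 < δ₂ := htabs.trans htδ
  set l : ℝ := δ₁ / δ₂ with hl
  have hl0 : 0 < l := div_pos h1 hδ2
  have hl1 : l < 1 := (div_lt_one hδ2).mpr h12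
  have hlδ : l * δ₂ = δ₁ := div_mul_cancel₀ _ hδ2.ne'
  have hlt0 : l * t ≠ 0 := mul_ne_zero hl0.ne' ht0
  have hnu : ‖u‖ ≤ ‖v‖ + ω := by
    have hh1 := norm_sub_norm_le u v
    have hh2 := mem_closedBall_iff_norm.mp hu
    linarith
  set A := f (y + t • u) - f y with hA
  set B := f (y + (l * t) • u) - f y with hB
  rw [Set.mem_add]
  refine ⟨(l * t)⁻¹ • B, ⟨l * t, hlt0, ?_, u, hu, rfl⟩,
    t⁻¹ • A - (l * t)⁻¹ • B, ?_, by abel⟩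
  · rw [abs_mul, abs_of_pos hl0]
    calc l * |t| < l * δ₂ := by nlinarith
      _ = δ₁ := hlδ
  · rw [mem_closedBall_zero_iff]
    have hdecomp : t⁻¹ • A - (l * t)⁻¹ • B
        = t⁻¹ • (A - B) + (t⁻¹ - (l * t)⁻¹) • B := by module
    have hAB : ‖A - B‖ ≤ K * ((1 - l) * |t| * ‖u‖) := by
      have e1 : A - B = f (y + t • u) - f (y + (l * t) • u) := by rw [hA, hB]; abel
      have e2 : (y + t • u) - (y + (l * t) • u) = ((1 - l) * t) • u := by module
      calc ‖A - B‖ = ‖f (y + t • u) - f (y + (l * t) • u)‖ := by rw [e1]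
        _ ≤ K * ‖(y + t • u) - (y + (l * t) • u)‖ := hf _ _
        _ = K * ((1 - l) * |t| * ‖u‖) := by
            rw [e2, norm_smul, Real.norm_eq_abs, abs_mul,
              abs_of_pos (by linarith : (0:ℝ) < 1 - l)]
    have hBn : ‖B‖ ≤ K * (l * |t| * ‖u‖) := by
      calc ‖B‖ ≤ K * ‖(y + (l * t) • u) - y‖ := hf _ _
        _ = K * (l * |t| * ‖u‖) := by
            rw [add_sub_cancel_left, norm_smul, Real.norm_eq_abs, abs_mul,
              abs_of_pos hl0]
    have hco : |t⁻¹ - (l * t)⁻¹| * (l * |t|) = 1 - l := by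
      have e3 : t⁻¹ - (l * t)⁻¹ = ((l - 1) / l) * t⁻¹ := by
        field_simp
      rw [e3, abs_mul, abs_div, abs_inv, abs_of_pos hl0,
        abs_of_neg (by linarith : l - 1 < 0)]
      field_simp
      ring
    have hterm1 : ‖t⁻¹ • (A - B)‖ ≤ K * ((1 - l) * ‖u‖) := by
      rw [norm_smul, Real.norm_eq_abs, abs_inv]
      rw [inv_mul_le_iff₀ htabs]
      calc ‖A - B‖ ≤ K * ((1 - l) * |t| * ‖u‖) := hAB
        _ = |t| * (K * ((1 - l) * ‖u‖)) := by ring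
    have hterm2 : ‖(t⁻¹ - (l * t)⁻¹) • B‖ ≤ K * ((1 - l) * ‖u‖) := by
      rw [norm_smul, Real.norm_eq_abs]
      calc |t⁻¹ - (l * t)⁻¹| * ‖B‖
          ≤ |t⁻¹ - (l * t)⁻¹| * (K * (l * |t| * ‖u‖)) := by
            exact mul_le_mul_of_nonneg_left hBn (abs_nonneg _)
        _ = (|t⁻¹ - (l * t)⁻¹| * (l * |t|)) * (K * ‖u‖) := by ring
        _ = (1 - l) * (K * ‖u‖) := by rw [hco]
        _ = K * ((1 - l) * ‖u‖) := by ring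
    calc ‖t⁻¹ • A - (l * t)⁻¹ • B‖
        = ‖t⁻¹ • (A - B) + (t⁻¹ - (l * t)⁻¹) • B‖ := by rw [hdecomp]
      _ ≤ ‖t⁻¹ • (A - B)‖ + ‖(t⁻¹ - (l * t)⁻¹) • B‖ := norm_add_le _ _
      _ ≤ 2 * K * (‖v‖ + ω) * (1 - δ₁ / δ₂) := by
          rw [← hl]
          have key : K * (1 - l) * ‖u‖ ≤ K * (1 - l) * (‖v‖ + ω) :=
            mul_le_mul_of_nonneg_left hnu (by nlinarith)
          linarith
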